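/- arXiv:2201.07528 — 2 statements merged into one kernel-verified Lean document; each statement's English description precedes it below -/
import Mathlib

section
/- Let G be a finite subcubic class two graph. Then the critical subgraph K_G of G (the set of edges of G that are conflicting in some minimal colouring of G) equals the union of all representative conflicting subsets of G of minimal order, i.e. K_G = ⋃{ R : R is a representative conflicting subset of G with |R| minimal among all representative conflicting subsets of G }. -/
open SimpleGraph

variable {V : Type*}

/-- Two edges (of a graph) are adjacent if they are distinct and share a vertex. -/
def EdgesAdj (e₁ e₂ : Sym2 V) : Prop := e₁ ≠ e₂ ∧ ∃ v, v ∈ e₁ ∧ v ∈ e₂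

/-- `f` is a proper edge colouring of `G`: adjacent edges of `G` get distinct colours. -/
def IsProperEC (G : SimpleGraph V) {α : Type*} (f : Sym2 V → α) : Prop :=
  ∀ e₁ ∈ G.edgeSet, ∀ e₂ ∈ G.edgeSet, EdgesAdj e₁ e₂ → f e₁ ≠ f e₂

/-- `G` is 3-edge-colourable. -/
def ThreeEC (G : SimpleGraph V) : Prop := ∃ f : Sym2 V → Fin 3, IsProperEC G f

/-- The degree of a vertex. -/
noncomputable def deg (G : SimpleGraph V) (v : V) : ℕ := Nat.card (G.neighborSet v)

/-- Every vertex has degree at most 3. -/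
def Subcubic (G : SimpleGraph V) : Prop := ∀ v, deg G v ≤ 3

/-- Every vertex has degree exactly 3. -/
def CubicGraph (G : SimpleGraph V) : Prop := ∀ v, deg G v = 3

/-- The resistance of `G`: the minimum number of edges whose removal from `G`
yields a 3-edge-colourable graph. -/
noncomputable def resistance (G : SimpleGraph V) : ℕ :=
  sInf {n | ∃ R : Set (Sym2 V), R.ncard = n ∧ ThreeEC (G.deleteEdges R)}

/-- `M` is a minimal conflicting subgraph of `G`: a subgraph of `G` that is not
3-edge-colourable, but `M − e` is 3-edge-colourable for every edge `e` of `M`. -/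
def MinConfl (G M : SimpleGraph V) : Prop :=
  M ≤ G ∧ ¬ ThreeEC M ∧ ∀ e ∈ M.edgeSet, ThreeEC (M.deleteEdges {e})

/-- `R` is a representative conflicting subset of `G`: a set of edges of `G`
containing at least one edge from every minimal conflicting subgraph of `G`. -/
def RepConfl (G : SimpleGraph V) (R : Set (Sym2 V)) : Prop :=
  R ⊆ G.edgeSet ∧ ∀ M : SimpleGraph V, MinConfl G M → (R ∩ M.edgeSet).Nonempty

/-- A minimal colouring of `G`: a proper 4-edge-colouring (colour `0` playing the role
of the fourth colour) in which exactly `resistance G` edges of `G` receive colour `0`. -/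
def IsMinimalColoring (G : SimpleGraph V) (f : Sym2 V → Fin 4) : Prop :=
  IsProperEC G f ∧ {e | e ∈ G.edgeSet ∧ f e = 0}.ncard = resistance G

-- ===== auxiliary lemmas =====

private lemma edge_ex {G : SimpleGraph V} :
    ∀ {e : Sym2 V}, e ∈ G.edgeSet → ∀ {v : V}, v ∈ e → ∃ z, e = s(v, z) ∧ G.Adj v z := by
  intro e
  induction e using Sym2.ind with
  | _ α β =>
    intro he v hv
    rw [Sym2.mem_iff] at hv
    rw [mem_edgeSet] at he
    rcases hv with rfl | rfl
    · exact ⟨β, rfl, he⟩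
    · exact ⟨α, Sym2.eq_swap, he.symm⟩

private lemma threeEC_mono {G H : SimpleGraph V} (hle : H ≤ G) (h : ThreeEC G) : ThreeEC H := by
  obtain ⟨f, hf⟩ := h
  exact ⟨f, fun e₁ h₁ e₂ h₂ hadj => hf e₁ (edgeSet_mono hle h₁) e₂ (edgeSet_mono hle h₂) hadj⟩

private lemma threeEC_of_empty {H : SimpleGraph V} (h : H.edgeSet = ∅) : ThreeEC H :=
  ⟨fun _ => 0, fun e₁ h₁ => by rw [h] at h₁; exact absurd h₁ (Set.notMem_empty _)⟩

private lemma exists_min_conflicting [Fintype V] :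
    ∀ (n : ℕ) (H : SimpleGraph V), H.edgeSet.ncard ≤ n → ¬ ThreeEC H →
      ∃ M, M ≤ H ∧ ¬ ThreeEC M ∧ ∀ e ∈ M.edgeSet, ThreeEC (M.deleteEdges {e}) := by
  intro n
  induction n with
  | zero =>
    intro H hcard hH
    exact absurd (threeEC_of_empty ((Set.ncard_eq_zero (Set.toFinite _)).mp
      (Nat.le_zero.mp hcard))) hH
  | succ n ih =>
    intro H hcard hH
    by_cases hmin : ∀ e ∈ H.edgeSet, ThreeEC (H.deleteEdges {e})
    · exact ⟨H, le_rfl, hH, hmin⟩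
    · push_neg at hmin
      obtain ⟨e, he, hne⟩ := hmin
      have hsub : (H.deleteEdges {e}).edgeSet.ncard ≤ n := by
        rw [edgeSet_deleteEdges]
        have h1 : (H.edgeSet \ {e}).ncard < H.edgeSet.ncard :=
          Set.ncard_diff_singleton_lt_of_mem he (Set.toFinite _)
        omega
      obtain ⟨M, hM1, hM2, hM3⟩ := ih (H.deleteEdges {e}) hsub hne
      exact ⟨M, hM1.trans (deleteEdges_le _), hM2, hM3⟩

private lemma repConfl_iff [Fintype V] (G : SimpleGraph V) (R : Set (Sym2 V))
    (hR : R ⊆ G.edgeSet) : RepConfl G R ↔ ThreeEC (G.deleteEdges R) := by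
  constructor
  · intro hrc
    by_contra hne
    obtain ⟨M, hM1, hM2, hM3⟩ := exists_min_conflicting _ (G.deleteEdges R) le_rfl hne
    obtain ⟨e, he1, he2⟩ := hrc.2 M ⟨hM1.trans (deleteEdges_le _), hM2, hM3⟩
    have := edgeSet_mono hM1 he2
    rw [edgeSet_deleteEdges] at this
    exact this.2 he1
  · intro h3
    refine ⟨hR, fun M hM => ?_⟩
    by_contra hemp
    rw [Set.not_nonempty_iff_eq_empty] at hemp
    have hle : M ≤ G.deleteEdges R := by
      intro y z hyz
      rw [deleteEdges_adj]
      refine ⟨hM.1 hyz, fun hin => ?_⟩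
      have hx : s(y,z) ∈ R ∩ M.edgeSet := ⟨hin, by rwa [mem_edgeSet]⟩
      rw [hemp] at hx
      exact hx
    exact hM.2.1 (threeEC_mono hle h3)

private lemma resistance_le [Fintype V] (G : SimpleGraph V) (R : Set (Sym2 V))
    (h : ThreeEC (G.deleteEdges R)) : resistance G ≤ R.ncard :=
  Nat.sInf_le ⟨R, rfl, h⟩

private lemma resistance_spec [Fintype V] (G : SimpleGraph V) :
    ∃ R : Set (Sym2 V), R ⊆ G.edgeSet ∧ R.ncard = resistance G ∧ ThreeEC (G.deleteEdges R) := by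
  have hne : {n | ∃ R : Set (Sym2 V), R.ncard = n ∧ ThreeEC (G.deleteEdges R)}.Nonempty := by
    refine ⟨(Set.univ : Set (Sym2 V)).ncard, Set.univ, rfl, threeEC_of_empty ?_⟩
    rw [edgeSet_deleteEdges]
    simp
  obtain ⟨R, hcard, h3⟩ := Nat.sInf_mem hne
  have hgraph : G.deleteEdges (R ∩ G.edgeSet) = G.deleteEdges R := by
    ext y z
    rw [deleteEdges_adj, deleteEdges_adj]
    constructor
    · rintro ⟨h1, h2⟩
      exact ⟨h1, fun hr => h2 ⟨hr, by rwa [mem_edgeSet]⟩⟩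
    · rintro ⟨h1, h2⟩
      exact ⟨h1, fun hr => h2 hr.1⟩
  refine ⟨R ∩ G.edgeSet, Set.inter_subset_right, le_antisymm ?_ ?_, by rwa [hgraph]⟩
  · calc (R ∩ G.edgeSet).ncard ≤ R.ncard := Set.ncard_le_ncard Set.inter_subset_left (Set.toFinite _)
      _ = resistance G := hcard
  · exact resistance_le G _ (by rwa [hgraph])


private lemma walk_aux {H : SimpleGraph V} {x : V}
    (hdeg : ∀ y z₁ z₂ z₃ : V, H.Adj y z₁ → H.Adj y z₂ → H.Adj y z₃ → z₁ = z₂ ∨ z₁ = z₃ ∨ z₂ = z₃)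
    (hx : ∀ z z' : V, H.Adj x z → H.Adj x z' → z = z') :
    ∀ {s v : V} (q : H.Walk s v),
      (∀ z z' : V, H.Adj v z → H.Adj v z' → z = z') → v ≠ x →
      ∀ (p : H.Walk s x) (t : V), H.Adj s t →
      q.IsPath → p.IsPath → t ∉ q.support → t ∉ p.support → False := by
  intro s v q
  induction q with
  | nil =>
    intro hv hvx p t hadj _ hpp htq htp
    cases p with
    | nil => exact hvx rfl
    | @cons _ s₁' _ h' p' =>
      have ht : t = s₁' := hv _ _ hadj h'
      apply htp
      rw [ht, Walk.support_cons]
      exact List.mem_cons_of_mem _ p'.start_mem_support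
  | @cons s s₁ _ h qtl ih =>
    intro hv hvx p t hadj hqq hpp htq htp
    cases p with
    | nil =>
      have ht : t = s₁ := hx _ _ hadj h
      apply htq
      rw [ht, Walk.support_cons]
      exact List.mem_cons_of_mem _ qtl.start_mem_support
    | @cons _ s₁' _ h' p' =>
      rcases hdeg s t s₁ s₁' hadj h h' with h1 | h2 | h3
      · apply htq
        rw [h1, Walk.support_cons]
        exact List.mem_cons_of_mem _ qtl.start_mem_support
      · apply htp
        rw [h2, Walk.support_cons]
        exact List.mem_cons_of_mem _ p'.start_mem_support
      · subst h3
        obtain ⟨hq', hsq⟩ := (Walk.cons_isPath_iff _ _).mp hqq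
        obtain ⟨hp', hsp⟩ := (Walk.cons_isPath_iff _ _).mp hpp
        exact ih hv hvx p' s h.symm hq' hp' hsq hsp

private lemma three_pendant {H : SimpleGraph V} {u v x : V}
    (hdeg : ∀ y z₁ z₂ z₃ : V, H.Adj y z₁ → H.Adj y z₂ → H.Adj y z₃ → z₁ = z₂ ∨ z₁ = z₃ ∨ z₂ = z₃)
    (hu : ∀ z z' : V, H.Adj u z → H.Adj u z' → z = z')
    (hv : ∀ z z' : V, H.Adj v z → H.Adj v z' → z = z')
    (hx : ∀ z z' : V, H.Adj x z → H.Adj x z' → z = z')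
    (huv : u ≠ v) (hux : u ≠ x) (hvx : v ≠ x)
    (hruv : H.Reachable u v) (hrux : H.Reachable u x) : False := by
  classical
  obtain ⟨q₀⟩ := hruv
  obtain ⟨p₀⟩ := hrux
  obtain ⟨q, hq⟩ : ∃ q : H.Walk u v, q.IsPath := ⟨q₀.bypass, q₀.bypass_isPath⟩
  obtain ⟨p, hp⟩ : ∃ p : H.Walk u x, p.IsPath := ⟨p₀.bypass, p₀.bypass_isPath⟩
  cases q with
  | nil => exact huv rfl
  | cons h1 q' =>
    cases p with
    | nil => exact hux rfl
    | cons h2 p' =>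
      have he := hu _ _ h2 h1
      subst he
      obtain ⟨hq', huq⟩ := (Walk.cons_isPath_iff _ _).mp hq
      obtain ⟨hp', hup⟩ := (Walk.cons_isPath_iff _ _).mp hp
      exact walk_aux hdeg hx q' hv hvx p' u h1.symm hq' hp' huq hup

private lemma extend_col [Fintype V] {G : SimpleGraph V} {R : Set (Sym2 V)} {v u : V}
    (hvu : G.Adj v u)
    (g : Sym2 V → Fin 3) (hg : IsProperEC (G.deleteEdges R) g)
    (α : Fin 3)
    (hu : ∀ z, (G.deleteEdges R).Adj u z → g s(u,z) ≠ α)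
    (hv : ∀ z, (G.deleteEdges R).Adj v z → g s(v,z) ≠ α) :
    ThreeEC (G.deleteEdges (R \ {s(v,u)})) := by
  classical
  refine ⟨fun e => if e = s(v,u) then α else g e, ?_⟩
  have hedge : ∀ e ∈ (G.deleteEdges (R \ {s(v,u)})).edgeSet, e ≠ s(v,u) →
      e ∈ (G.deleteEdges R).edgeSet := by
    intro e he' hne
    rw [edgeSet_deleteEdges] at he' ⊢
    exact ⟨he'.1, fun hR => he'.2 ⟨hR, hne⟩⟩
  intro d₁ hd₁ d₂ hd₂ hadj
  dsimp only
  by_cases h1 : d₁ = s(v,u) <;> by_cases h2 : d₂ = s(v,u)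
  · exact absurd (h1.trans h2.symm) hadj.1
  · subst h1
    rw [if_pos rfl, if_neg h2]
    obtain ⟨-, y, hy1, hy2⟩ := hadj
    have hy : y = v ∨ y = u := by simpa using hy1
    obtain ⟨z, rfl, hz⟩ := edge_ex (hedge _ hd₂ h2) hy2
    rcases hy with rfl | rfl
    · exact fun hh => hv z hz hh.symm
    · exact fun hh => hu z hz hh.symm
  · subst h2
    rw [if_pos rfl, if_neg h1]
    obtain ⟨-, y, hy1, hy2⟩ := hadj
    have hy : y = v ∨ y = u := by simpa using hy2
    obtain ⟨z, rfl, hz⟩ := edge_ex (hedge _ hd₁ h1) hy1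
    rcases hy with rfl | rfl
    · exact hv z hz
    · exact hu z hz
  · simp only [if_neg h1, if_neg h2]
    exact hg _ (hedge _ hd₁ h1) _ (hedge _ hd₂ h2) hadj

private def kSub (G' : SimpleGraph V) (g : Sym2 V → Fin 3) (a c : Fin 3) : SimpleGraph V where
  Adj y z := G'.Adj y z ∧ (g s(y,z) = a ∨ g s(y,z) = c)
  symm := by
    constructor
    intro y z h
    refine ⟨h.1.symm, ?_⟩
    rw [Sym2.eq_swap]
    exact h.2
  loopless := ⟨fun y h => G'.loopless.irrefl y h.1⟩

private lemma gprop_ne [Fintype V] {G' : SimpleGraph V} {g : Sym2 V → Fin 3}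
    (hg : IsProperEC G' g) {y z z' : V} (hz : G'.Adj y z) (hz' : G'.Adj y z') (hzz : z ≠ z') :
    g s(y,z) ≠ g s(y,z') := by
  have hedge : s(y,z) ≠ s(y,z') := by
    intro hh
    rw [Sym2.eq_iff] at hh
    rcases hh with ⟨-, h⟩ | ⟨h, -⟩
    · exact hzz h
    · exact hz'.ne' h.symm
  exact hg _ (by rwa [mem_edgeSet]) _ (by rwa [mem_edgeSet]) ⟨hedge, y, by simp, by simp⟩

private lemma kempe_case [Fintype V] {G : SimpleGraph V} {R : Set (Sym2 V)} {v u w : V}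
    {a c : Fin 3} (hac : a ≠ c)
    (g : Sym2 V → Fin 3) (hg : IsProperEC (G.deleteEdges R) g)
    (hvw : (G.deleteEdges R).Adj v w) (hcol : g s(v,w) = c)
    (hvuniq : ∀ z, (G.deleteEdges R).Adj v z → z = w)
    (hnoc : ∀ z, (G.deleteEdges R).Adj u z → g s(u,z) ≠ c)
    (hnr : ¬ (kSub (G.deleteEdges R) g a c).Reachable u v) :
    ∃ g' : Sym2 V → Fin 3, IsProperEC (G.deleteEdges R) g' ∧
      (∀ z, (G.deleteEdges R).Adj u z → g' s(u,z) ≠ a) ∧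
      (∀ z, (G.deleteEdges R).Adj v z → g' s(v,z) ≠ a) := by
  classical
  set G' := G.deleteEdges R with hG'
  set H := kSub G' g a c with hHdef
  set C : Set V := {y | H.Reachable u y} with hCdef
  set σ : Fin 3 → Fin 3 := fun γ => if γ = a then c else if γ = c then a else γ with hσ
  have hσinv : ∀ γ, σ (σ γ) = γ := by
    intro γ
    by_cases h1 : γ = a
    · simp [hσ, h1, hac, Ne.symm hac]
    · by_cases h2 : γ = c
      · simp [hσ, h1, h2, hac, Ne.symm hac]
      · simp [hσ, h1, h2]
  have hσinj : ∀ γ γ', σ γ = σ γ' → γ = γ' := by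
    intro γ γ' h
    have := congrArg σ h
    rwa [hσinv, hσinv] at this
  have hσa : ∀ γ, σ γ = a ↔ γ = c := by
    intro γ
    by_cases h1 : γ = a
    · simp [hσ, h1, hac, Ne.symm hac]
    · by_cases h2 : γ = c
      · simp [hσ, h1, h2]
      · simp [hσ, h1, h2]
  set g₁ : Sym2 V → Fin 3 := fun e => if ∃ y ∈ e, y ∈ C then σ (g e) else g e with hg₁
  -- P0: an a/c-coloured edge with an endpoint in C has all endpoints in C
  have P0 : ∀ e ∈ G'.edgeSet, (g e = a ∨ g e = c) → (∃ y ∈ e, y ∈ C) →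
      ∀ y' ∈ e, y' ∈ C := by
    rintro e he hcol' ⟨y, hy, hyC⟩ y' hy'
    obtain ⟨z, rfl, hz⟩ := edge_ex he hy
    have hHadj : H.Adj y z := ⟨by rwa [mem_edgeSet] at he, hcol'⟩
    have hzC : z ∈ C := hyC.trans hHadj.reachable
    have : y' = y ∨ y' = z := by simpa using hy'
    rcases this with rfl | rfl
    · exact hyC
    · exact hzC
  have P1 : IsProperEC G' g₁ := by
    intro d₁ hd₁ d₂ hd₂ hadj
    by_cases c1 : ∃ y ∈ d₁, y ∈ C <;> by_cases c2 : ∃ y ∈ d₂, y ∈ C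
    · simp only [hg₁, if_pos c1, if_pos c2]
      exact fun h => hg _ hd₁ _ hd₂ hadj (hσinj _ _ h)
    · simp only [hg₁, if_pos c1, if_neg c2]
      by_cases hca : g d₁ = a ∨ g d₁ = c
      · exfalso
        obtain ⟨-, y, hy1, hy2⟩ := hadj
        exact c2 ⟨y, hy2, P0 _ hd₁ hca c1 y hy1⟩
      · push_neg at hca
        have : σ (g d₁) = g d₁ := by simp [hσ, hca.1, hca.2]
        rw [this]
        exact hg _ hd₁ _ hd₂ hadj
    · simp only [hg₁, if_neg c1, if_pos c2]
      by_cases hca : g d₂ = a ∨ g d₂ = c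
      · exfalso
        obtain ⟨-, y, hy1, hy2⟩ := hadj
        exact c1 ⟨y, hy1, P0 _ hd₂ hca c2 y hy2⟩
      · push_neg at hca
        have : σ (g d₂) = g d₂ := by simp [hσ, hca.1, hca.2]
        rw [this]
        exact hg _ hd₁ _ hd₂ hadj
    · simp only [hg₁, if_neg c1, if_neg c2]
      exact hg _ hd₁ _ hd₂ hadj
  have hvC : v ∉ C := hnr
  have hwC : w ∉ C := by
    intro hwC
    exact hnr (hwC.trans (SimpleGraph.Adj.reachable (by exact ⟨hvw.symm, Or.inr (by rwa [Sym2.eq_swap])⟩ : H.Adj w v)))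
  have P2 : ∀ z, G'.Adj v z → g₁ s(v,z) = c := by
    intro z hz
    have hzw := hvuniq z hz
    subst hzw
    have hcond : ¬ ∃ y ∈ s(v,z), y ∈ C := by
      rintro ⟨y, hy, hyC⟩
      have : y = v ∨ y = z := by simpa using hy
      rcases this with rfl | rfl
      · exact hvC hyC
      · exact hwC hyC
    simp only [hg₁, if_neg hcond]
    exact hcol
  have P3 : ∀ z, G'.Adj u z → g₁ s(u,z) ≠ a := by
    intro z hz
    have hcond : ∃ y ∈ s(u,z), y ∈ C := ⟨u, by simp, Reachable.refl u⟩
    simp only [hg₁, if_pos hcond]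
    intro hh
    exact hnoc z hz ((hσa _).mp hh)
  exact ⟨g₁, P1, P3, fun z hz => by rw [P2 z hz]; exact Ne.symm hac⟩

private lemma min_del_matching [Fintype V] {G : SimpleGraph V} (hsub : Subcubic G)
    {R : Set (Sym2 V)} (hRE : R ⊆ G.edgeSet) (hcard : R.ncard = resistance G)
    (g : Sym2 V → Fin 3) (hg : IsProperEC (G.deleteEdges R) g) :
    ∀ e₁ ∈ R, ∀ e₂ ∈ R, ¬ EdgesAdj e₁ e₂ := by
  classical
  intro e₁ he₁ e₂ he₂ hadj
  obtain ⟨hne, v, hy1, hy2⟩ := hadj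
  obtain ⟨u, he₁eq, hvu⟩ := edge_ex (hRE he₁) hy1
  subst he₁eq
  obtain ⟨x, he₂eq, hvx⟩ := edge_ex (hRE he₂) hy2
  subst he₂eq
  have hux : u ≠ x := fun h => hne (by rw [h])
  -- degree bound tool
  have hdeg4 : ∀ (y z₁ z₂ z₃ z₄ : V), G.Adj y z₁ → G.Adj y z₂ → G.Adj y z₃ → G.Adj y z₄ →
      z₁ ≠ z₂ → z₁ ≠ z₃ → z₁ ≠ z₄ → z₂ ≠ z₃ → z₂ ≠ z₄ → z₃ ≠ z₄ → False := by
    intro y z₁ z₂ z₃ z₄ a1 a2 a3 a4 d12 d13 d14 d23 d24 d34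
    have hsubset : ({z₁, z₂, z₃, z₄} : Set V) ⊆ G.neighborSet y := by
      intro z hz
      simp only [Set.mem_insert_iff, Set.mem_singleton_iff] at hz
      rcases hz with rfl | rfl | rfl | rfl
      · exact a1
      · exact a2
      · exact a3
      · exact a4
    have h4 : ({z₁, z₂, z₃, z₄} : Set V).ncard = 4 := by
      rw [Set.ncard_insert_of_notMem (by
          simp only [Set.mem_insert_iff, Set.mem_singleton_iff]
          push_neg
          exact ⟨d12, d13, d14⟩) (Set.toFinite _),
        Set.ncard_insert_of_notMem (by
          simp only [Set.mem_insert_iff, Set.mem_singleton_iff]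
          push_neg
          exact ⟨d23, d24⟩) (Set.toFinite _),
        Set.ncard_insert_of_notMem (by simpa using d34) (Set.toFinite _),
        Set.ncard_singleton]
    have hle := Set.ncard_le_ncard hsubset (Set.toFinite _)
    have hdeg := hsub y
    rw [deg, Nat.card_coe_set_eq] at hdeg
    omega
  have hadjR : ∀ {y z : V}, (G.deleteEdges R).Adj y z → G.Adj y z ∧ s(y,z) ∉ R := by
    intro y z h
    rwa [deleteEdges_adj] at h
  -- v has at most one neighbour in G - R
  have hvdeg : ∀ z z' : V, (G.deleteEdges R).Adj v z → (G.deleteEdges R).Adj v z' → z = z' := by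
    intro z z' hz hz'
    by_contra hzz
    have hzu : z ≠ u := fun h => (hadjR hz).2 (h ▸ he₁)
    have hzx : z ≠ x := fun h => (hadjR hz).2 (h ▸ he₂)
    have hzu' : z' ≠ u := fun h => (hadjR hz').2 (h ▸ he₁)
    have hzx' : z' ≠ x := fun h => (hadjR hz').2 (h ▸ he₂)
    exact hdeg4 v u x z z' hvu hvx (hadjR hz).1 (hadjR hz').1 hux (Ne.symm hzu) (Ne.symm hzu')
      (Ne.symm hzx) (Ne.symm hzx') hzz
  -- u has at most two neighbours in G - R
  have he₁' : s(u,v) ∈ R := by rwa [Sym2.eq_swap]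
  have he₂' : s(x,v) ∈ R := by rwa [Sym2.eq_swap]
  have hudeg : ∀ z₁ z₂ z₃ : V, (G.deleteEdges R).Adj u z₁ → (G.deleteEdges R).Adj u z₂ →
      (G.deleteEdges R).Adj u z₃ → z₁ = z₂ ∨ z₁ = z₃ ∨ z₂ = z₃ := by
    intro z₁ z₂ z₃ h1 h2 h3
    by_contra hcon
    push_neg at hcon
    have hv1 : z₁ ≠ v := fun h => (hadjR h1).2 (h ▸ he₁')
    have hv2 : z₂ ≠ v := fun h => (hadjR h2).2 (h ▸ he₁')
    have hv3 : z₃ ≠ v := fun h => (hadjR h3).2 (h ▸ he₁')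
    exact hdeg4 u v z₁ z₂ z₃ hvu.symm (hadjR h1).1 (hadjR h2).1 (hadjR h3).1
      (Ne.symm hv1) (Ne.symm hv2) (Ne.symm hv3) hcon.1 hcon.2.1 hcon.2.2
  have hxdeg : ∀ z₁ z₂ z₃ : V, (G.deleteEdges R).Adj x z₁ → (G.deleteEdges R).Adj x z₂ →
      (G.deleteEdges R).Adj x z₃ → z₁ = z₂ ∨ z₁ = z₃ ∨ z₂ = z₃ := by
    intro z₁ z₂ z₃ h1 h2 h3
    by_contra hcon
    push_neg at hcon
    have hv1 : z₁ ≠ v := fun h => (hadjR h1).2 (h ▸ he₂')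
    have hv2 : z₂ ≠ v := fun h => (hadjR h2).2 (h ▸ he₂')
    have hv3 : z₃ ≠ v := fun h => (hadjR h3).2 (h ▸ he₂')
    exact hdeg4 x v z₁ z₂ z₃ hvx.symm (hadjR h1).1 (hadjR h2).1 (hadjR h3).1
      (Ne.symm hv1) (Ne.symm hv2) (Ne.symm hv3) hcon.1 hcon.2.1 hcon.2.2
  -- the key minimality contradiction
  have key : ∀ e ∈ R, ThreeEC (G.deleteEdges (R \ {e})) → False := by
    intro e he h3
    have h1 := resistance_le G _ h3
    have h2 : (R \ {e}).ncard < R.ncard := Set.ncard_diff_singleton_lt_of_mem he (Set.toFinite _)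
    omega
  -- helper : find a colour free at u distinct from a forbidden colour, via pigeonhole
  have freeu : ∀ (y : V), (∀ z₁ z₂ z₃ : V, (G.deleteEdges R).Adj y z₁ →
      (G.deleteEdges R).Adj y z₂ → (G.deleteEdges R).Adj y z₃ → z₁ = z₂ ∨ z₁ = z₃ ∨ z₂ = z₃) →
      (¬ ∃ α : Fin 3, ∀ z, (G.deleteEdges R).Adj y z → g s(y,z) ≠ α) → False := by
    intro y hy hcon
    push_neg at hcon
    obtain ⟨z₀, hz₀, hc₀⟩ := hcon 0
    obtain ⟨z₁, hz₁, hc₁⟩ := hcon 1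
    obtain ⟨z₂, hz₂, hc₂⟩ := hcon 2
    rcases hy z₀ z₁ z₂ hz₀ hz₁ hz₂ with h | h | h
    · rw [h] at hc₀; rw [hc₀] at hc₁; exact absurd hc₁ (by decide)
    · rw [h] at hc₀; rw [hc₀] at hc₂; exact absurd hc₂ (by decide)
    · rw [h] at hc₁; rw [hc₁] at hc₂; exact absurd hc₂ (by decide)
  by_cases hvex : ∃ w, (G.deleteEdges R).Adj v w
  case neg =>
    have hvnone : ∀ z, (G.deleteEdges R).Adj v z → g s(v,z) ≠ 0 :=
      fun z hz => absurd ⟨z, hz⟩ hvex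
    have hfree : ∃ α : Fin 3, ∀ z, (G.deleteEdges R).Adj u z → g s(u,z) ≠ α := by
      by_contra hcon
      exact freeu u hudeg hcon
    obtain ⟨α, hα⟩ := hfree
    exact key _ he₁ (extend_col hvu g hg α hα (fun z hz => absurd ⟨z, hz⟩ hvex))
  case pos =>
    obtain ⟨w, hvw⟩ := hvex
    have hwuniq : ∀ z, (G.deleteEdges R).Adj v z → z = w := fun z hz => hvdeg z w hz hvw
    set c := g s(v,w) with hc
    obtain ⟨a, b, hab, hac, hbc, hall⟩ :=
      (by decide : ∀ c' : Fin 3, ∃ a b : Fin 3, a ≠ b ∧ a ≠ c' ∧ b ≠ c' ∧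
        ∀ γ : Fin 3, γ = a ∨ γ = b ∨ γ = c') c
    have hvcol : ∀ z, (G.deleteEdges R).Adj v z → g s(v,z) = c := by
      intro z hz
      rw [hwuniq z hz]
    -- case B1 at u
    by_cases hu1 : ∃ α : Fin 3, α ≠ c ∧ ∀ z, (G.deleteEdges R).Adj u z → g s(u,z) ≠ α
    case pos =>
      obtain ⟨α, hαc, hα⟩ := hu1
      exact key _ he₁ (extend_col hvu g hg α hα
        (fun z hz => by rw [hvcol z hz]; exact Ne.symm hαc))
    case neg =>
    by_cases hx1 : ∃ α : Fin 3, α ≠ c ∧ ∀ z, (G.deleteEdges R).Adj x z → g s(x,z) ≠ α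
    case pos =>
      obtain ⟨α, hαc, hα⟩ := hx1
      exact key _ he₂ (extend_col hvx g hg α hα
        (fun z hz => by rw [hvcol z hz]; exact Ne.symm hαc))
    case neg =>
    push_neg at hu1 hx1
    -- u and x see no c-coloured edge
    have hunoc : ∀ z, (G.deleteEdges R).Adj u z → g s(u,z) ≠ c := by
      obtain ⟨za, hza, hca⟩ := hu1 a hac
      obtain ⟨zb, hzb, hcb⟩ := hu1 b hbc
      intro z hz hc'
      have d1 : za ≠ zb := fun h => hab (by rw [← hca, h, hcb])
      have d2 : z ≠ za := fun h => hac (by rw [h] at hc'; rw [hc'] at hca; exact hca.symm)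
      have d3 : z ≠ zb := fun h => hbc (by rw [h] at hc'; rw [hc'] at hcb; exact hcb.symm)
      rcases hudeg z za zb hz hza hzb with h | h | h
      · exact d2 h
      · exact d3 h
      · exact d1 h
    have hxnoc : ∀ z, (G.deleteEdges R).Adj x z → g s(x,z) ≠ c := by
      obtain ⟨za, hza, hca⟩ := hx1 a hac
      obtain ⟨zb, hzb, hcb⟩ := hx1 b hbc
      intro z hz hc'
      have d1 : za ≠ zb := fun h => hab (by rw [← hca, h, hcb])
      have d2 : z ≠ za := fun h => hac (by rw [h] at hc'; rw [hc'] at hca; exact hca.symm)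
      have d3 : z ≠ zb := fun h => hbc (by rw [h] at hc'; rw [hc'] at hcb; exact hcb.symm)
      rcases hxdeg z za zb hz hza hzb with h | h | h
      · exact d2 h
      · exact d3 h
      · exact d1 h
    by_cases hr1 : (kSub (G.deleteEdges R) g a c).Reachable u v
    case neg =>
      obtain ⟨g', hg', hu', hv'⟩ := kempe_case hac g hg hvw hc.symm hwuniq hunoc hr1
      exact key _ he₁ (extend_col hvu g' hg' a hu' hv')
    case pos =>
    by_cases hr2 : (kSub (G.deleteEdges R) g a c).Reachable x v
    case neg =>
      obtain ⟨g', hg', hu', hv'⟩ := kempe_case hac g hg hvw hc.symm hwuniq hxnoc hr2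
      exact key _ he₂ (extend_col hvx g' hg' a hu' hv')
    case pos =>
    -- final structural contradiction : u, v, x are three pendant vertices of one component
    set H := kSub (G.deleteEdges R) g a c with hH
    have hdegH : ∀ y z₁ z₂ z₃ : V, H.Adj y z₁ → H.Adj y z₂ → H.Adj y z₃ →
        z₁ = z₂ ∨ z₁ = z₃ ∨ z₂ = z₃ := by
      rintro y z₁ z₂ z₃ ⟨hz₁, hc₁⟩ ⟨hz₂, hc₂⟩ ⟨hz₃, hc₃⟩
      by_contra hcon
      push_neg at hcon
      have n12 := gprop_ne hg hz₁ hz₂ hcon.1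
      have n13 := gprop_ne hg hz₁ hz₃ hcon.2.1
      have n23 := gprop_ne hg hz₂ hz₃ hcon.2.2
      rcases hc₁ with h1 | h1 <;> rcases hc₂ with h2 | h2 <;> rcases hc₃ with h3 | h3 <;>
        first
          | exact n12 (h1.trans h2.symm)
          | exact n13 (h1.trans h3.symm)
          | exact n23 (h2.trans h3.symm)
    have huH : ∀ z z' : V, H.Adj u z → H.Adj u z' → z = z' := by
      rintro z z' ⟨hz, hcz⟩ ⟨hz', hcz'⟩
      by_contra hzz
      have hca : g s(u,z) = a := hcz.resolve_right (hunoc z hz)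
      have hca' : g s(u,z') = a := hcz'.resolve_right (hunoc z' hz')
      exact gprop_ne hg hz hz' hzz (hca.trans hca'.symm)
    have hxH : ∀ z z' : V, H.Adj x z → H.Adj x z' → z = z' := by
      rintro z z' ⟨hz, hcz⟩ ⟨hz', hcz'⟩
      by_contra hzz
      have hca : g s(x,z) = a := hcz.resolve_right (hxnoc z hz)
      have hca' : g s(x,z') = a := hcz'.resolve_right (hxnoc z' hz')
      exact gprop_ne hg hz hz' hzz (hca.trans hca'.symm)
    have hvH : ∀ z z' : V, H.Adj v z → H.Adj v z' → z = z' :=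
      fun z z' hz hz' => hvdeg z z' hz.1 hz'.1
    exact three_pendant hdegH huH hvH hxH (Ne.symm hvu.ne) hux (hvx.ne)
      hr1 (hr1.trans hr2.symm)

/-- The critical subgraph of a finite subcubic class two graph equals the union of all
representative conflicting subsets of minimal order. -/
theorem stmt_6 {V : Type*} [Fintype V] (G : SimpleGraph V)
    (hsub : Subcubic G) (hclass2 : ¬ ThreeEC G) :
    {e | e ∈ G.edgeSet ∧ ∃ f : Sym2 V → Fin 4, IsMinimalColoring G f ∧ f e = 0}
      = ⋃₀ {R | RepConfl G R ∧ ∀ R' : Set (Sym2 V), RepConfl G R' → R.ncard ≤ R'.ncard} := by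
  classical
  ext e
  simp only [Set.mem_setOf_eq, Set.mem_sUnion]
  constructor
  · rintro ⟨heG, f, ⟨hfprop, hfcard⟩, hf0⟩
    set Rf : Set (Sym2 V) := {e' | e' ∈ G.edgeSet ∧ f e' = 0} with hRf
    have hRfE : Rf ⊆ G.edgeSet := fun e' he' => he'.1
    have h3 : ThreeEC (G.deleteEdges Rf) := by
      set m : Fin 4 → Fin 3 := fun i => if i = 1 then 0 else if i = 2 then 1 else 2 with hm
      have hminj : ∀ i j : Fin 4, i ≠ 0 → j ≠ 0 → m i = m j → i = j := by decide
      refine ⟨fun e' => m (f e'), ?_⟩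
      intro d₁ hd₁ d₂ hd₂ hadj
      rw [edgeSet_deleteEdges] at hd₁ hd₂
      have hn₁ : f d₁ ≠ 0 := fun h => hd₁.2 ⟨hd₁.1, h⟩
      have hn₂ : f d₂ ≠ 0 := fun h => hd₂.2 ⟨hd₂.1, h⟩
      exact fun h => hfprop _ hd₁.1 _ hd₂.1 hadj (hminj _ _ hn₁ hn₂ h)
    refine ⟨Rf, ⟨(repConfl_iff G Rf hRfE).mpr h3, ?_⟩, ⟨heG, hf0⟩⟩
    intro R' hR'
    have h3' : ThreeEC (G.deleteEdges R') := (repConfl_iff G R' hR'.1).mp hR'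
    calc Rf.ncard = resistance G := hfcard
      _ ≤ R'.ncard := resistance_le G R' h3'
  · rintro ⟨R, ⟨⟨hRE, hRrep⟩, hmin⟩, heR⟩
    have h3 : ThreeEC (G.deleteEdges R) := (repConfl_iff G R hRE).mp ⟨hRE, hRrep⟩
    have hup : resistance G ≤ R.ncard := resistance_le G R h3
    have hdown : R.ncard ≤ resistance G := by
      obtain ⟨R₀, hR₀E, hR₀card, hR₀3⟩ := resistance_spec G
      calc R.ncard ≤ R₀.ncard := hmin R₀ ((repConfl_iff G R₀ hR₀E).mpr hR₀3)
        _ = resistance G := hR₀card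
    have hcard : R.ncard = resistance G := le_antisymm hdown hup
    obtain ⟨g, hg⟩ := h3
    have hmatch := min_del_matching hsub hRE hcard g hg
    set f : Sym2 V → Fin 4 := fun e' => if e' ∈ R then 0 else (g e').succ with hf
    have hfR : ∀ e', e' ∈ R → f e' = 0 := fun e' he' => by simp only [hf, if_pos he']
    have hfnR : ∀ e', e' ∉ R → f e' = (g e').succ := fun e' he' => by simp only [hf, if_neg he']
    have hfprop : IsProperEC G f := by
      intro d₁ hd₁ d₂ hd₂ hadj
      by_cases h1 : d₁ ∈ R <;> by_cases h2 : d₂ ∈ R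
      · exact absurd hadj (hmatch d₁ h1 d₂ h2)
      · rw [hfR d₁ h1, hfnR d₂ h2]
        exact fun h => Fin.succ_ne_zero _ h.symm
      · rw [hfR d₂ h2, hfnR d₁ h1]
        exact Fin.succ_ne_zero _
      · rw [hfnR d₁ h1, hfnR d₂ h2]
        have hd₁' : d₁ ∈ (G.deleteEdges R).edgeSet := by
          rw [edgeSet_deleteEdges]; exact ⟨hd₁, h1⟩
        have hd₂' : d₂ ∈ (G.deleteEdges R).edgeSet := by
          rw [edgeSet_deleteEdges]; exact ⟨hd₂, h2⟩
        exact fun h => hg _ hd₁' _ hd₂' hadj (Fin.succ_injective _ h)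
    have hset : {e' | e' ∈ G.edgeSet ∧ f e' = 0} = R := by
      ext e'
      simp only [Set.mem_setOf_eq]
      constructor
      · rintro ⟨-, h0⟩
        by_contra hn
        rw [hfnR e' hn] at h0
        exact Fin.succ_ne_zero _ h0
      · intro h
        exact ⟨hRE h, hfR e' h⟩
    exact ⟨hRE heR, f, ⟨hfprop, by rw [hset]; exact hcard⟩, hfR e heR⟩
end

section
/- There exists no cubic dense cluster. Equivalently: there is no finite cubic class two graph G such that the collection of all minimal conflicting subgraphs of G forms a dense cluster, i.e. such that there exists an edge of G contained in every minimal conflicting subgraph of G. (This uses the fact that no cubic graph has resistance 1.) -/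
open SimpleGraph

variable {V : Type*}

lemma threeEC_of_no_edges (G : SimpleGraph V) (h : G.edgeSet = ∅) : ThreeEC G :=
  ⟨fun _ => 0, fun e₁ h₁ => by simp [h] at h₁⟩

lemma exists_min [Fintype V] :
    ∀ n (H : SimpleGraph V), H.edgeSet.ncard ≤ n → ¬ ThreeEC H →
    ∃ M, M ≤ H ∧ ¬ ThreeEC M ∧ ∀ e ∈ M.edgeSet, ThreeEC (M.deleteEdges {e}) := by
  intro n
  induction n with
  | zero =>
    intro H hcard hH
    exact absurd (threeEC_of_no_edges H
      ((Set.ncard_eq_zero H.edgeSet.toFinite).1 (Nat.le_zero.1 hcard))) hH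
  | succ n ih =>
    intro H hcard hH
    by_cases hmin : ∀ e ∈ H.edgeSet, ThreeEC (H.deleteEdges {e})
    · exact ⟨H, le_refl _, hH, hmin⟩
    · push_neg at hmin
      obtain ⟨e, he, hne⟩ := hmin
      have hcard' : (H.deleteEdges {e}).edgeSet.ncard ≤ n := by
        rw [edgeSet_deleteEdges]
        have : (H.edgeSet \ {e}).ncard = H.edgeSet.ncard - 1 := by
          rw [← Set.ncard_diff_singleton_of_mem he]
        have hpos : 1 ≤ H.edgeSet.ncard := by
          rw [Nat.one_le_iff_ne_zero]
          intro h0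
          rw [(Set.ncard_eq_zero H.edgeSet.toFinite).1 h0] at he
          exact he
        omega
      obtain ⟨M, hM1, hM2, hM3⟩ := ih (H.deleteEdges {e}) hcard' hne
      exact ⟨M, hM1.trans (deleteEdges_le _), hM2, hM3⟩


lemma ncard_filter_univ {α : Type*} [Fintype α] (s : Set α) [DecidablePred (· ∈ s)] :
    (Finset.univ.filter (· ∈ s)).card = s.ncard := by
  rw [Set.ncard_eq_toFinset_card']
  congr 1
  ext x
  simp

lemma card_mem_sym2 [Fintype V] [DecidableEq V] (a : Sym2 V) (h : ¬ a.IsDiag) :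
    (Finset.univ.filter (· ∈ a)).card = 2 := by
  induction a with
  | _ x y =>
    rw [Sym2.isDiag_iff_proj_eq] at h
    have : Finset.univ.filter (· ∈ s(x, y)) = {x, y} := by
      ext w
      simp [Sym2.mem_iff]
    rw [this, Finset.card_insert_of_notMem (by simp [h]), Finset.card_singleton]

lemma ncard_incidenceSet [Fintype V] [DecidableEq V] (G : SimpleGraph V) (w : V) :
    (G.incidenceSet w).ncard = Nat.card (G.neighborSet w) := by
  rw [← Nat.card_coe_set_eq, Nat.card_congr (G.incidenceSetEquivNeighborSet w)]

lemma no_res_one [Fintype V] (G : SimpleGraph V) (hcubic : ∀ v, Nat.card (G.neighborSet v) = 3)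
    (e : Sym2 V) (he : e ∈ G.edgeSet) (h3 : ThreeEC (G.deleteEdges {e})) : ThreeEC G := by
  classical
  induction e with
  | _ u v =>
  obtain ⟨c, hc⟩ := h3
  set G' := G.deleteEdges {s(u, v)} with hG'def
  have hadj : G.Adj u v := he
  have huv : u ≠ v := hadj.ne
  have hG'edge : G'.edgeSet = G.edgeSet \ {s(u, v)} := edgeSet_deleteEdges _
  have hinc : ∀ w, G'.incidenceSet w = G.incidenceSet w \ {s(u, v)} := by
    intro w; ext a
    simp only [incidenceSet, hG'edge, Set.mem_diff, Set.mem_singleton_iff, Set.mem_sep_iff, Set.mem_setOf_eq]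
    tauto
  have hcard3 : ∀ w, (G.incidenceSet w).ncard = 3 := fun w => by
    rw [ncard_incidenceSet]; exact hcubic w
  have hcardG' : ∀ w, (G'.incidenceSet w).ncard = (if w ∈ s(u, v) then 2 else 3) := by
    intro w
    rw [hinc w]
    by_cases hw : w ∈ s(u, v)
    · have hm : s(u, v) ∈ G.incidenceSet w := ⟨he, hw⟩
      rw [if_pos hw, Set.ncard_diff_singleton_of_mem hm, hcard3]
    · have hm : s(u, v) ∉ G.incidenceSet w := fun h => hw h.2
      rw [if_neg hw, Set.diff_singleton_eq_self hm, hcard3]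
  set I : V → Finset (Sym2 V) := fun w => Finset.univ.filter (· ∈ G'.incidenceSet w) with hIdef
  have hIcard : ∀ w, (I w).card = (if w ∈ s(u, v) then 2 else 3) := fun w => by
    rw [hIdef, ncard_filter_univ, hcardG']
  have hImem : ∀ w a, a ∈ I w ↔ a ∈ G'.edgeSet ∧ w ∈ a := by
    intro w a; simp only [hIdef, Finset.mem_filter, Finset.mem_univ, true_and]; exact Iff.rfl
  have hinj : ∀ w, ∀ a ∈ I w, ∀ b ∈ I w, c a = c b → a = b := by
    intro w a ha b hb hcab
    by_contra hne
    rw [hImem] at ha hb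
    exact hc a ha.1 b hb.1 ⟨hne, w, ha.2, hb.2⟩ hcab
  set C : V → Finset (Fin 3) := fun w => (I w).image c with hCdef
  have hCcard : ∀ w, (C w).card = (I w).card := fun w =>
    Finset.card_image_of_injOn (fun a ha b hb => hinj w a ha b hb)
  have hCuniv : ∀ w, w ∉ s(u, v) → C w = Finset.univ := by
    intro w hw
    apply Finset.eq_univ_of_card
    rw [hCcard, hIcard, if_neg hw]; rfl
  have hmiss : ∀ w ∈ s(u, v), ∃ i, i ∉ C w ∧ ∀ k, k ≠ i → k ∈ C w := by
    intro w hw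
    have h2 : (C w).card = 2 := by rw [hCcard, hIcard, if_pos hw]
    have hex : ∃ i, i ∉ C w := by
      by_contra hall; push_neg at hall
      have : C w = Finset.univ := Finset.eq_univ_iff_forall.2 hall
      rw [this] at h2; simp [Finset.card_univ] at h2
    obtain ⟨i, hi⟩ := hex
    refine ⟨i, hi, ?_⟩
    have hsub : C w ⊆ Finset.univ.erase i := fun k hk =>
      Finset.mem_erase.2 ⟨fun h => hi (h ▸ hk), Finset.mem_univ k⟩
    have hcle : (Finset.univ.erase i).card ≤ (C w).card := by
      rw [Finset.card_erase_of_mem (Finset.mem_univ i), h2]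
      simp [Finset.card_univ]
    have heq : C w = Finset.univ.erase i := Finset.eq_of_subset_of_card_le hsub hcle
    intro k hk
    rw [heq]
    exact Finset.mem_erase.2 ⟨hk, Finset.mem_univ k⟩
  obtain ⟨i, hiu, hiu'⟩ := hmiss u (by simp)
  obtain ⟨j, hjv, hjv'⟩ := hmiss v (by simp)
  by_cases hij : i = j
  · -- extend the colouring
    subst hij
    refine ⟨fun a => if a = s(u, v) then i else c a, ?_⟩
    intro a₁ h₁ a₂ h₂ hadj'
    obtain ⟨hne, w, hw1, hw2⟩ := hadj'
    have key : ∀ b, b ∈ G.edgeSet → b ≠ s(u, v) → w ∈ b → w ∈ s(u, v) → c b ≠ i := by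
      intro b hb hbne hwb hwuv
      have hbI : b ∈ I w := (hImem w b).2 ⟨by rw [hG'edge]; exact ⟨hb, hbne⟩, hwb⟩
      have hbC : c b ∈ C w := Finset.mem_image_of_mem c hbI
      rcases Sym2.mem_iff.1 hwuv with rfl | rfl
      · exact fun h => hiu (h ▸ hbC)
      · exact fun h => hjv (h ▸ hbC)
    by_cases e1 : a₁ = s(u, v) <;> by_cases e2 : a₂ = s(u, v)
    · exact absurd (e1.trans e2.symm) hne
    · simp only [if_pos e1, if_neg e2]
      exact fun h => key a₂ h₂ e2 hw2 (e1 ▸ hw1) h.symm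
    · simp only [if_neg e1, if_pos e2]
      exact key a₁ h₁ e1 hw1 (e2 ▸ hw2)
    · simp only [if_neg e1, if_neg e2]
      exact hc a₁ (by rw [hG'edge]; exact ⟨h₁, e1⟩) a₂ (by rw [hG'edge]; exact ⟨h₂, e2⟩)
        ⟨hne, w, hw1, hw2⟩
  · -- parity contradiction
    exfalso
    set T : Finset (Sym2 V) :=
      Finset.univ.filter (fun a => a ∈ G'.edgeSet ∧ c a = i) with hTdef
    have key : ∀ w, (I w).filter (fun a => c a = i) = T.filter (fun a => w ∈ a) := by
      intro w; ext a
      simp only [Finset.mem_filter, hImem, hTdef, Finset.mem_univ, true_and]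
      tauto
    have step1a : ∀ w, i ∈ C w → ((I w).filter (fun a => c a = i)).card = 1 := by
      intro w hi
      obtain ⟨a₀, ha₀, hca₀⟩ := Finset.mem_image.1 hi
      rw [Finset.card_eq_one]
      refine ⟨a₀, ?_⟩
      ext b
      simp only [Finset.mem_filter, Finset.mem_singleton]
      constructor
      · rintro ⟨hb, hcb⟩; exact hinj w b hb a₀ ha₀ (hcb.trans hca₀.symm)
      · rintro rfl; exact ⟨ha₀, hca₀⟩
    have step1b : ∀ w, i ∉ C w → ((I w).filter (fun a => c a = i)).card = 0 := by
      intro w hi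
      rw [Finset.card_eq_zero, Finset.filter_eq_empty_iff]
      intro a ha hca
      exact hi (Finset.mem_image.2 ⟨a, ha, hca⟩)
    have count1 : ∑ w, ((I w).filter (fun a => c a = i)).card = 2 * T.card := by
      calc ∑ w, ((I w).filter (fun a => c a = i)).card
          = ∑ w, (T.filter (fun a => w ∈ a)).card := by simp_rw [key]
        _ = ∑ w, ∑ a ∈ T, if w ∈ a then 1 else 0 :=
            Finset.sum_congr rfl fun w _ => Finset.card_filter _ _
        _ = ∑ a ∈ T, ∑ w, if w ∈ a then 1 else 0 := Finset.sum_comm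
        _ = ∑ a ∈ T, (Finset.univ.filter (· ∈ a)).card :=
            Finset.sum_congr rfl fun a _ => (Finset.card_filter _ _).symm
        _ = ∑ a ∈ T, 2 := by
            refine Finset.sum_congr rfl (fun a ha => card_mem_sym2 a ?_)
            rw [hTdef, Finset.mem_filter] at ha
            exact G'.not_isDiag_of_mem_edgeSet ha.2.1
        _ = 2 * T.card := by rw [Finset.sum_const, smul_eq_mul, mul_comm]
    have hmemC : ∀ w, w ≠ u → i ∈ C w := by
      intro w hw
      by_cases hwv : w = v
      · subst hwv; exact hjv' i hij
      · have hns : w ∉ s(u, v) := by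
          rw [Sym2.mem_iff]
          rintro (rfl | rfl)
          · exact hw rfl
          · exact hwv rfl
        rw [hCuniv w hns]; exact Finset.mem_univ i
    have count2 : ∑ w, ((I w).filter (fun a => c a = i)).card = Fintype.card V - 1 := by
      rw [← Finset.sum_erase_add _ _ (Finset.mem_univ u), step1b u hiu,
        Finset.sum_congr rfl (fun w hw => step1a w (hmemC w (Finset.mem_erase.1 hw).1)),
        Finset.sum_const, smul_eq_mul, mul_one,
        Finset.card_erase_of_mem (Finset.mem_univ u), Finset.card_univ, Nat.add_zero]
    have handshake : 3 * Fintype.card V = 2 * G.edgeFinset.card := by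
      have hdeg : ∀ w, G.degree w = 3 := by
        intro w
        rw [← hcubic w, Nat.card_coe_set_eq, SimpleGraph.degree, neighborFinset_def,
          Set.toFinset_card, ← Nat.card_coe_set_eq, Nat.card_eq_fintype_card]
      calc 3 * Fintype.card V = ∑ w : V, G.degree w := by
            simp [hdeg, Finset.sum_const, Finset.card_univ, mul_comm]
        _ = 2 * G.edgeFinset.card := G.sum_degrees_eq_twice_card_edges
    have hpos : 1 ≤ Fintype.card V := Fintype.card_pos_iff.2 ⟨u⟩
    omega

/-- There is no cubic dense cluster: no finite cubic class two graph has an edge contained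
in every one of its minimal conflicting subgraphs. -/
theorem stmt_11 {V : Type*} [Fintype V] (G : SimpleGraph V)
    (hcubic : CubicGraph G) (hclass2 : ¬ ThreeEC G) :
    ¬ ∃ e ∈ G.edgeSet, ∀ M : SimpleGraph V, MinConfl G M → e ∈ M.edgeSet := by
  classical
  have hcubic' : ∀ v, Nat.card (G.neighborSet v) = 3 := hcubic
  rintro ⟨e, he, hall⟩
  have h3 : ThreeEC (G.deleteEdges {e}) := by
    by_contra h
    obtain ⟨M, hM1, hM2, hM3⟩ :=
      exists_min ((G.deleteEdges {e}).edgeSet.ncard) (G.deleteEdges {e}) le_rfl h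
    have hMG : MinConfl G M := ⟨hM1.trans (deleteEdges_le _), hM2, hM3⟩
    have heM : e ∈ (G.deleteEdges {e}).edgeSet := edgeSet_mono hM1 (hall M hMG)
    rw [edgeSet_deleteEdges] at heM
    exact heM.2 rfl
  exact hclass2 (no_res_one G hcubic' e he h3)
end
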